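/- Theorem 3.1: Given a world w, there exists a unique local name assignment l_w that is minimal (with respect to the pointwise order) in the set of all local name assignments consistent with w. Moreover, for every principal expression p and all keys k₁, k₂: w,l_w,k₁ ⊨ p ▷ k₂ if and only if w,l,k₁ ⊨ p ▷ k₂ holds for all local name assignments l consistent with w. -/
import Mathlib


/-- Principal expressions over keys `K`, global names `G`, local names `N`. -/
inductive PExp (K G N : Type*) where
  | key : K → PExp K G N
  | glob : G → PExp K G N
  | loc : N → PExp K G N
  | s : PExp K G N → PExp K G N → PExp K G N

/-- Formulas of LLNC. -/
inductive Fml (K G N : Type*) where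
  | bdto : PExp K G N → PExp K G N → Fml K G N
  | cert : K → Fml K G N → Fml K G N
  | not : Fml K G N → Fml K G N
  | and : Fml K G N → Fml K G N → Fml K G N

/-- A world: an interpretation of global names and an assignment of
certificates to keys, with only finitely many certificates issued. -/
structure World (K G N : Type*) where
  beta : G → Set K
  certs : K → Set (Fml K G N)
  finite_certs : (⋃ k, certs k).Finite

variable {K G N : Type*}

/-- The interpretation of a principal expression relative to a world, a
local name assignment, and a key. -/
def interp (w : World K G N) (l : K → N → Set K) : PExp K G N → K → Set K
  | .key k', _ => {k'}
  | .glob g, _ => w.beta g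
  | .loc n, k => l k n
  | .s p q, k => ⋃ k' ∈ interp w l p k, interp w l q k'

/-- Satisfaction of a formula at a world, local name assignment, and key. -/
def Sat (w : World K G N) (l : K → N → Set K) (k : K) : Fml K G N → Prop
  | .bdto p q => interp w l q k ⊆ interp w l p k
  | .cert k' φ => φ ∈ w.certs k'
  | .not φ => ¬ Sat w l k φ
  | .and φ ψ => Sat w l k φ ∧ Sat w l k ψ

/-- A local name assignment is consistent with a world if every issued
binding certificate holds at the issuer. -/
def Consistent (w : World K G N) (l : K → N → Set K) : Prop :=
  ∀ (k : K) (n : N) (p : PExp K G N),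
    Fml.bdto (.loc n) p ∈ w.certs k → Sat w l k (.bdto (.loc n) p)

lemma interp_mono (w : World K G N) {l l' : K → N → Set K}
    (h : ∀ k n, l k n ⊆ l' k n) :
    ∀ (p : PExp K G N) (k : K), interp w l p k ⊆ interp w l' p k := by
  intro p
  induction p with
  | key k' => intro k; exact fun x hx => hx
  | glob g => intro k; exact fun x hx => hx
  | loc n => intro k; exact h k n
  | s p q ihp ihq =>
    intro k x hx
    simp only [interp, Set.mem_iUnion] at hx ⊢
    obtain ⟨k', hk', hx⟩ := hx
    exact ⟨k', ihp k hk', ihq k' hx⟩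

/-- Theorem 3.1: there is a unique local name assignment minimal
(in the pointwise order) among those consistent with `w`; moreover, it satisfies
`p ▷ k₂` at `k₁` iff every assignment consistent with `w` does. -/
theorem min_consistent_assignment [Nonempty K] (w : World K G N) :
    (∃! lw : K → N → Set K,
        Consistent w lw ∧ ∀ l, Consistent w l → ∀ (k : K) (n : N), lw k n ⊆ l k n) ∧
    (∀ lw : K → N → Set K,
        (Consistent w lw ∧ ∀ l, Consistent w l → ∀ (k : K) (n : N), lw k n ⊆ l k n) →
        ∀ (p : PExp K G N) (k₁ k₂ : K),
          Sat w lw k₁ (.bdto p (.key k₂)) ↔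
            ∀ l, Consistent w l → Sat w l k₁ (.bdto p (.key k₂))) := by
  set lw : K → N → Set K := fun k n => {x | ∀ l, Consistent w l → x ∈ l k n} with hlw
  have hcons : Consistent w lw := by
    intro k n p hp x hx l hl
    exact hl k n p hp (interp_mono w (fun k n x (hx : x ∈ lw k n) => hx l hl) p k hx)
  have hmin : ∀ l, Consistent w l → ∀ (k : K) (n : N), lw k n ⊆ l k n :=
    fun l hl k n x hx => hx l hl
  constructor
  · refine ⟨lw, ⟨hcons, hmin⟩, ?_⟩
    rintro l ⟨hl, hlmin⟩
    funext k n
    exact Set.Subset.antisymm (hlmin lw hcons k n) (hmin l hl k n)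
  · rintro l₀ ⟨hl₀, hl₀min⟩ p k₁ k₂
    constructor
    · intro hs l hl x hx
      rcases hx with rfl
      exact interp_mono w (hl₀min l hl) p k₁ (hs rfl)
    · intro h
      exact h l₀ hl₀
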